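/- arXiv:1106.1781 — 2 statements merged into one kernel-verified Lean document; each statement's English description precedes it below -/
import Mathlib

section
/- Let N ≥ 1 be an integer, Δx = 1/N, Δt > 0, and let uⁿ and uⁿ⁺¹ be periodic grid functions related by the fully-discrete semi-implicit scheme uⁿ⁺¹_j = ūⁿ_j − Δt ūⁿ_j (D₀uⁿ)_j − Δt (D₋D₊²uⁿ⁺¹)_j + Δt (D₊³D₋²uⁿ⁺¹)_j for all j, where ūⁿ_j = (uⁿ_{j+1} + uⁿ_{j−1})/2. If the CFL condition (Δt/Δx)·M·(1 + 24(Δt/Δx)·M) ≤ 3/2 holds with M = max_{1 ≤ j ≤ N} |uⁿ_j|, then ‖uⁿ⁺¹‖_h² + Δt·Δx·( ‖D₋D₊²uⁿ⁺¹‖_h² + ‖D₊D₋uⁿ⁺¹‖_h² ) + (Δx²/8)‖D₀uⁿ‖_h² ≤ ‖uⁿ‖_h². -/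
/-- Forward difference operator `(D₊u)_i = (u_{i+1} − u_i)/h`. -/
noncomputable def Dp (h : ℝ) (u : ℤ → ℝ) : ℤ → ℝ := fun i => (u (i + 1) - u i) / h

/-- Backward difference operator `(D₋u)_i = (u_i − u_{i−1})/h`. -/
noncomputable def Dm (h : ℝ) (u : ℤ → ℝ) : ℤ → ℝ := fun i => (u i - u (i - 1)) / h

/-- Central difference operator `(D₀u)_i = (u_{i+1} − u_{i−1})/(2h)`. -/
noncomputable def D0 (h : ℝ) (u : ℤ → ℝ) : ℤ → ℝ := fun i => (u (i + 1) - u (i - 1)) / (2 * h)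

/-- Discrete inner product `(f,g)_h = h Σ_{i=1}^N f_i g_i`. -/
noncomputable def iph (N : ℕ) (h : ℝ) (f g : ℤ → ℝ) : ℝ :=
  h * ∑ i ∈ Finset.Icc (1 : ℤ) (N : ℤ), f i * g i

/-- Discrete squared norm `‖f‖_h² = h Σ_{i=1}^N f_i²`. -/
noncomputable def nh2 (N : ℕ) (h : ℝ) (f : ℤ → ℝ) : ℝ :=
  h * ∑ i ∈ Finset.Icc (1 : ℤ) (N : ℤ), (f i) ^ 2

/-- Discrete norm `‖f‖_h`. -/
noncomputable def normh (N : ℕ) (h : ℝ) (f : ℤ → ℝ) : ℝ := Real.sqrt (nh2 N h f)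

/-- A periodic grid function with period `N`: `u_{i+N} = u_i` for all `i`. -/
def PeriodicGrid (N : ℕ) (u : ℤ → ℝ) : Prop := ∀ i : ℤ, u (i + N) = u i

lemma shift1 (N : ℕ) (hN : 1 ≤ N) (f : ℤ → ℝ) (hf : PeriodicGrid N f) :
    ∑ i ∈ Finset.Icc (1:ℤ) (N:ℤ), f (i+1) = ∑ i ∈ Finset.Icc (1:ℤ) (N:ℤ), f i := by
  have hN' : (1:ℤ) ≤ N := by exact_mod_cast hN
  have h1 : ∑ i ∈ Finset.Icc (1:ℤ) (N:ℤ), f (i+1)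
      = ∑ i ∈ Finset.Icc (2:ℤ) ((N:ℤ)+1), f i := by
    rw [show ((2:ℤ)) = 1 + 1 by ring, ← Finset.map_add_right_Icc]
    rw [Finset.sum_map]
    rfl
  have h2 : Finset.Icc (2:ℤ) ((N:ℤ)+1) = insert ((N:ℤ)+1) (Finset.Icc (2:ℤ) (N:ℤ)) := by
    ext x; simp [Finset.mem_Icc]; omega
  have h3 : Finset.Icc (1:ℤ) (N:ℤ) = insert (1:ℤ) (Finset.Icc (2:ℤ) (N:ℤ)) := by
    ext x; simp [Finset.mem_Icc]; omega
  have hfN : f ((N:ℤ)+1) = f 1 := by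
    have := hf 1; rw [show (1:ℤ) + N = (N:ℤ)+1 by ring] at this; exact this
  rw [h1, h2, h3, Finset.sum_insert (by simp), Finset.sum_insert (by simp), hfN]

lemma per_comp_add (N : ℕ) (f : ℤ → ℝ) (hf : PeriodicGrid N f) (c : ℤ) :
    PeriodicGrid N (fun i => f (i + c)) := by
  intro i
  simp only []
  rw [show i + (N:ℤ) + c = (i + c) + N by ring, hf]

lemma shiftneg1 (N : ℕ) (hN : 1 ≤ N) (f : ℤ → ℝ) (hf : PeriodicGrid N f) :
    ∑ i ∈ Finset.Icc (1:ℤ) (N:ℤ), f (i-1) = ∑ i ∈ Finset.Icc (1:ℤ) (N:ℤ), f i := by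
  have h := shift1 N hN (fun i => f (i - 1)) (by
    intro i; simp only []; rw [show i + (N:ℤ) - 1 = (i-1) + N by ring, hf])
  simp only [add_sub_cancel_right] at h
  exact h.symm

lemma shiftk (N : ℕ) (hN : 1 ≤ N) (f : ℤ → ℝ) (hf : PeriodicGrid N f) (k : ℤ) :
    ∑ i ∈ Finset.Icc (1:ℤ) (N:ℤ), f (i+k) = ∑ i ∈ Finset.Icc (1:ℤ) (N:ℤ), f i := by
  induction k using Int.induction_on with
  | zero => simp
  | succ k ih =>
      have h := shift1 N hN (fun i => f (i + k)) (per_comp_add N f hf k)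
      have e1 : ∑ i ∈ Finset.Icc (1:ℤ) (N:ℤ), f (i + ((k:ℤ)+1))
          = ∑ i ∈ Finset.Icc (1:ℤ) (N:ℤ), (fun j => f (j + (k:ℤ))) (i + 1) :=
        Finset.sum_congr rfl (fun i _ => by simp only []; congr 1; ring)
      rw [e1, h, ih]
  | pred k ih =>
      have h := shiftneg1 N hN (fun i => f (i + (-(k:ℤ)))) (per_comp_add N f hf _)
      have e1 : ∑ i ∈ Finset.Icc (1:ℤ) (N:ℤ), f (i + (-(k:ℤ) - 1))
          = ∑ i ∈ Finset.Icc (1:ℤ) (N:ℤ), (fun j => f (j + (-(k:ℤ)))) (i - 1) :=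
        Finset.sum_congr rfl (fun i _ => by simp only []; congr 1; ring)
      rw [e1, h, ih]


lemma per_Dp {N : ℕ} {u : ℤ → ℝ} (h : ℝ) (hu : PeriodicGrid N u) : PeriodicGrid N (Dp h u) := by
  intro i; unfold Dp
  rw [show i + (N:ℤ) + 1 = (i+1) + N by ring, hu, hu]

lemma per_Dm {N : ℕ} {u : ℤ → ℝ} (h : ℝ) (hu : PeriodicGrid N u) : PeriodicGrid N (Dm h u) := by
  intro i; unfold Dm
  rw [show i + (N:ℤ) - 1 = (i-1) + N by ring, hu, hu]

lemma per_D0 {N : ℕ} {u : ℤ → ℝ} (h : ℝ) (hu : PeriodicGrid N u) : PeriodicGrid N (D0 h u) := by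
  intro i; unfold D0
  rw [show i + (N:ℤ) + 1 = (i+1) + N by ring, show i + (N:ℤ) - 1 = (i-1) + N by ring, hu, hu]

lemma per_mul {N : ℕ} {f g : ℤ → ℝ} (hf : PeriodicGrid N f) (hg : PeriodicGrid N g) :
    PeriodicGrid N (fun i => f i * g i) := by
  intro i; simp only []; rw [hf, hg]

lemma per_pow {N : ℕ} {f : ℤ → ℝ} (hf : PeriodicGrid N f) (n : ℕ) :
    PeriodicGrid N (fun i => f i ^ n) := by
  intro i; simp only []; rw [hf]

lemma sbp_Dp (N : ℕ) (hN : 1 ≤ N) (h : ℝ) (hh : h ≠ 0) (f g : ℤ → ℝ)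
    (hf : PeriodicGrid N f) (hg : PeriodicGrid N g) :
    ∑ i ∈ Finset.Icc (1:ℤ) (N:ℤ), Dp h f i * g i
      = -∑ i ∈ Finset.Icc (1:ℤ) (N:ℤ), f i * Dm h g i := by
  have hF : PeriodicGrid N (fun i => f (i+1) * g i) := per_mul (per_comp_add N f hf 1) hg
  have hs := shiftk N hN _ hF (-1)
  have hs' : ∑ i ∈ Finset.Icc (1:ℤ) (N:ℤ), f i * g (i-1)
      = ∑ i ∈ Finset.Icc (1:ℤ) (N:ℤ), f (i+1) * g i := by
    rw [← hs]
    apply Finset.sum_congr rfl; intro i _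
    rw [show i + (-1:ℤ) + 1 = i by ring, show i + (-1:ℤ) = i - 1 by ring]
  have key : ∀ i : ℤ, Dp h f i * g i + f i * Dm h g i
      = (f (i+1) * g i - f i * g (i-1))/h := by
    intro i; unfold Dp Dm; field_simp; ring
  have hz : ∑ i ∈ Finset.Icc (1:ℤ) (N:ℤ), (Dp h f i * g i + f i * Dm h g i) = 0 := by
    rw [Finset.sum_congr rfl (fun i _ => key i), ← Finset.sum_div,
      Finset.sum_sub_distrib, hs', sub_self, zero_div]
  rw [Finset.sum_add_distrib] at hz
  linarith

lemma dp_self (N : ℕ) (hN : 1 ≤ N) (h : ℝ) (hh : h ≠ 0) (w : ℤ → ℝ)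
    (hw : PeriodicGrid N w) :
    ∑ i ∈ Finset.Icc (1:ℤ) (N:ℤ), Dp h w i * w i
      = -(h/2) * ∑ i ∈ Finset.Icc (1:ℤ) (N:ℤ), (Dp h w i)^2 := by
  have hs := shiftk N hN (fun i => w i ^ 2) (per_pow hw 2) 1
  have key : ∀ i : ℤ, Dp h w i * w i + (h/2) * (Dp h w i)^2
      = (w (i+1)^2 - w i^2)/(2*h) := by
    intro i; unfold Dp; field_simp; ring
  have hz : ∑ i ∈ Finset.Icc (1:ℤ) (N:ℤ), (Dp h w i * w i + (h/2) * (Dp h w i)^2) = 0 := by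
    rw [Finset.sum_congr rfl (fun i _ => key i), ← Finset.sum_div,
      Finset.sum_sub_distrib, hs, sub_self, zero_div]
  rw [Finset.sum_add_distrib, ← Finset.mul_sum] at hz
  linarith

lemma dm_self (N : ℕ) (hN : 1 ≤ N) (h : ℝ) (hh : h ≠ 0) (w : ℤ → ℝ)
    (hw : PeriodicGrid N w) :
    ∑ i ∈ Finset.Icc (1:ℤ) (N:ℤ), Dm h w i * w i
      = (h/2) * ∑ i ∈ Finset.Icc (1:ℤ) (N:ℤ), (Dm h w i)^2 := by
  have hs := shiftk N hN (fun i => w i ^ 2) (per_pow hw 2) (-1)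
  have hs' : ∑ i ∈ Finset.Icc (1:ℤ) (N:ℤ), w (i-1) ^ 2
      = ∑ i ∈ Finset.Icc (1:ℤ) (N:ℤ), w i ^ 2 := by
    rw [← hs]; apply Finset.sum_congr rfl; intro i _
    rw [show i + (-1:ℤ) = i - 1 by ring]
  have key : ∀ i : ℤ, Dm h w i * w i - (h/2) * (Dm h w i)^2
      = (w i^2 - w (i-1)^2)/(2*h) := by
    intro i; unfold Dm; field_simp; ring
  have hz : ∑ i ∈ Finset.Icc (1:ℤ) (N:ℤ), (Dm h w i * w i - (h/2) * (Dm h w i)^2) = 0 := by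
    rw [Finset.sum_congr rfl (fun i _ => key i), ← Finset.sum_div,
      Finset.sum_sub_distrib, hs', sub_self, zero_div]
  rw [Finset.sum_sub_distrib, ← Finset.mul_sum] at hz
  linarith

lemma ubar_sq_sum (N : ℕ) (hN : 1 ≤ N) (h : ℝ) (hh : h ≠ 0) (u : ℤ → ℝ)
    (hu : PeriodicGrid N u) :
    ∑ i ∈ Finset.Icc (1:ℤ) (N:ℤ), ((u (i+1) + u (i-1))/2)^2
      = ∑ i ∈ Finset.Icc (1:ℤ) (N:ℤ), u i ^ 2
        - h^2 * ∑ i ∈ Finset.Icc (1:ℤ) (N:ℤ), (D0 h u i)^2 := by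
  have hs1 := shiftk N hN (fun i => u i ^ 2) (per_pow hu 2) 1
  have hs2 := shiftk N hN (fun i => u i ^ 2) (per_pow hu 2) (-1)
  have hs2' : ∑ i ∈ Finset.Icc (1:ℤ) (N:ℤ), u (i-1) ^ 2
      = ∑ i ∈ Finset.Icc (1:ℤ) (N:ℤ), u i ^ 2 := by
    rw [← hs2]; apply Finset.sum_congr rfl; intro i _; ring_nf
  have key : ∀ i : ℤ, ((u (i+1) + u (i-1))/2)^2 + h^2 * (D0 h u i)^2
      = (u (i+1)^2 + u (i-1)^2)/2 := by
    intro i; unfold D0; field_simp; ring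
  have hz : ∑ i ∈ Finset.Icc (1:ℤ) (N:ℤ),
      (((u (i+1) + u (i-1))/2)^2 + h^2 * (D0 h u i)^2)
      = ∑ i ∈ Finset.Icc (1:ℤ) (N:ℤ), u i ^ 2 := by
    rw [Finset.sum_congr rfl (fun i _ => key i), ← Finset.sum_div,
      Finset.sum_add_distrib, hs1, hs2']
    ring
  rw [Finset.sum_add_distrib, ← Finset.mul_sum] at hz
  linarith

lemma ubar_sq_D0_sum (N : ℕ) (hN : 1 ≤ N) (h : ℝ) (hh : h ≠ 0) (u : ℤ → ℝ)
    (hu : PeriodicGrid N u) :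
    ∑ i ∈ Finset.Icc (1:ℤ) (N:ℤ), ((u (i+1) + u (i-1))/2)^2 * D0 h u i
      = -(h^2/3) * ∑ i ∈ Finset.Icc (1:ℤ) (N:ℤ), (D0 h u i)^3 := by
  have hs1 := shiftk N hN (fun i => u i ^ 3) (per_pow hu 3) 1
  have hs2 := shiftk N hN (fun i => u i ^ 3) (per_pow hu 3) (-1)
  have hs2' : ∑ i ∈ Finset.Icc (1:ℤ) (N:ℤ), u (i-1) ^ 3
      = ∑ i ∈ Finset.Icc (1:ℤ) (N:ℤ), u i ^ 3 := by
    rw [← hs2]; apply Finset.sum_congr rfl; intro i _; ring_nf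
  have key : ∀ i : ℤ, ((u (i+1) + u (i-1))/2)^2 * D0 h u i + (h^2/3) * (D0 h u i)^3
      = (u (i+1)^3 - u (i-1)^3)/(6*h) := by
    intro i; unfold D0; field_simp; ring
  have hz : ∑ i ∈ Finset.Icc (1:ℤ) (N:ℤ),
      (((u (i+1) + u (i-1))/2)^2 * D0 h u i + (h^2/3) * (D0 h u i)^3) = 0 := by
    rw [Finset.sum_congr rfl (fun i _ => key i), ← Finset.sum_div,
      Finset.sum_sub_distrib, hs1, hs2', sub_self, zero_div]
  rw [Finset.sum_add_distrib, ← Finset.mul_sum] at hz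
  linarith

lemma per_nsmul (N : ℕ) (u : ℤ → ℝ) (hu : PeriodicGrid N u) (r k : ℤ) :
    u (r + N * k) = u r := by
  induction k using Int.induction_on with
  | zero => simp
  | succ k ih =>
      have := hu (r + N * k)
      rw [show r + (N:ℤ) * (k+1) = r + N * k + N by ring, this, ih]
  | pred k ih =>
      have := hu (r + N * (-(k:ℤ)-1))
      rw [show r + (N:ℤ) * (-(k:ℤ)-1) + N = r + N * (-(k:ℤ)) by ring] at this
      rw [← this, ih]

lemma abs_le_sup (N : ℕ) (hN : 1 ≤ N) (u : ℤ → ℝ) (hu : PeriodicGrid N u) (j : ℤ) :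
    |u j| ≤ (Finset.Icc (1 : ℤ) (N : ℤ)).sup'
        (Finset.nonempty_Icc.mpr (by exact_mod_cast hN)) (fun j => |u j|) := by
  have hNpos : (0:ℤ) < N := by exact_mod_cast hN
  set q := (j - 1) / (N:ℤ) with hq
  have hmod := Int.mul_ediv_add_emod (j-1) (N:ℤ)
  rw [← hq] at hmod
  have h1 := Int.emod_nonneg (j-1) (by omega : (N:ℤ) ≠ 0)
  have h2 := Int.emod_lt_of_pos (j-1) hNpos
  have hr1 : 1 ≤ j - N * q := by linarith
  have hr2 : j - N * q ≤ N := by linarith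
  have hj : u j = u (j - N * q) := by
    have := per_nsmul N u hu (j - N * q) q
    rw [show j - (N:ℤ) * q + N * q = j by ring] at this
    exact this
  rw [hj]
  exact Finset.le_sup' (fun j => |u j|) (Finset.mem_Icc.mpr ⟨hr1, hr2⟩)


set_option maxHeartbeats 1600000 in
/-- Paper's Lemma 3.2, estimate (3.6): discrete `L²` stability of the fully-discrete
semi-implicit scheme
`uⁿ⁺¹_j = ūⁿ_j − Δt ūⁿ_j (D₀uⁿ)_j − Δt (D₋D₊²uⁿ⁺¹)_j + Δt (D₊³D₋²uⁿ⁺¹)_j`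
(with `ūⁿ_j = (uⁿ_{j+1}+uⁿ_{j−1})/2`) under the CFL condition
`(Δt/Δx) M (1 + 24 (Δt/Δx) M) ≤ 3/2`, `M = max_{1≤j≤N} |uⁿ_j|`:
`‖uⁿ⁺¹‖_h² + Δt Δx (‖D₋D₊²uⁿ⁺¹‖_h² + ‖D₊D₋uⁿ⁺¹‖_h²) + (Δx²/8) ‖D₀uⁿ‖_h² ≤ ‖uⁿ‖_h²`. -/
theorem fully_discrete_L2_stability (N : ℕ) (hN : 1 ≤ N) (Δx Δt : ℝ)
    (hΔx : Δx = 1 / N) (hΔt : 0 < Δt)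
    (un unp : ℤ → ℝ) (hun : PeriodicGrid N un) (hunp : PeriodicGrid N unp)
    (hscheme : ∀ j : ℤ, unp j = (un (j + 1) + un (j - 1)) / 2
        - Δt * ((un (j + 1) + un (j - 1)) / 2) * D0 Δx un j
        - Δt * Dm Δx (Dp Δx (Dp Δx unp)) j
        + Δt * Dp Δx (Dp Δx (Dp Δx (Dm Δx (Dm Δx unp)))) j)
    (M : ℝ)
    (hM : M = (Finset.Icc (1 : ℤ) (N : ℤ)).sup'
        (Finset.nonempty_Icc.mpr (by exact_mod_cast hN)) (fun j => |un j|))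
    (hcfl : (Δt / Δx) * M * (1 + 24 * (Δt / Δx) * M) ≤ 3 / 2) :
    nh2 N Δx unp
        + Δt * Δx * (nh2 N Δx (Dm Δx (Dp Δx (Dp Δx unp))) + nh2 N Δx (Dp Δx (Dm Δx unp)))
        + (Δx ^ 2 / 8) * nh2 N Δx (D0 Δx un)
      ≤ nh2 N Δx un := by
  have hxpos : 0 < Δx := by
    rw [hΔx]; positivity
  have hh : Δx ≠ 0 := ne_of_gt hxpos
  -- periodicity instances
  have hp1 : PeriodicGrid N (Dp Δx unp) := per_Dp _ hunp
  have hp2 : PeriodicGrid N (Dp Δx (Dp Δx unp)) := per_Dp _ hp1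
  have hm1 : PeriodicGrid N (Dm Δx unp) := per_Dm _ hunp
  have hm2 : PeriodicGrid N (Dm Δx (Dm Δx unp)) := per_Dm _ hm1
  have hm3 : PeriodicGrid N (Dm Δx (Dm Δx (Dm Δx unp))) := per_Dm _ hm2
  have hpm2 : PeriodicGrid N (Dp Δx (Dm Δx (Dm Δx unp))) := per_Dp _ hm2
  have hppm : PeriodicGrid N (Dp Δx (Dp Δx (Dm Δx (Dm Δx unp)))) := per_Dp _ hpm2
  have hpdm : PeriodicGrid N (Dp Δx (Dm Δx unp)) := per_Dp _ hm1
  have hdmw : PeriodicGrid N (Dm Δx (Dp Δx (Dp Δx unp))) := per_Dm _ hp2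
  -- implicit dissipative terms
  have hX : ∑ i ∈ Finset.Icc (1:ℤ) (N:ℤ), Dm Δx (Dp Δx (Dp Δx unp)) i * unp i
      = (Δx/2) * ∑ i ∈ Finset.Icc (1:ℤ) (N:ℤ), (Dp Δx (Dp Δx unp) i)^2 := by
    have t1 := sbp_Dp N hN Δx hh unp (Dp Δx (Dp Δx unp)) hunp hp2
    have t2 := dp_self N hN Δx hh (Dp Δx unp) hp1
    have c1 : ∑ i ∈ Finset.Icc (1:ℤ) (N:ℤ), Dm Δx (Dp Δx (Dp Δx unp)) i * unp i
        = ∑ i ∈ Finset.Icc (1:ℤ) (N:ℤ), unp i * Dm Δx (Dp Δx (Dp Δx unp)) i :=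
      Finset.sum_congr rfl (fun i _ => mul_comm _ _)
    have c2 : ∑ i ∈ Finset.Icc (1:ℤ) (N:ℤ), Dp Δx unp i * Dp Δx (Dp Δx unp) i
        = ∑ i ∈ Finset.Icc (1:ℤ) (N:ℤ), Dp Δx (Dp Δx unp) i * Dp Δx unp i :=
      Finset.sum_congr rfl (fun i _ => mul_comm _ _)
    linarith
  have hY : ∑ i ∈ Finset.Icc (1:ℤ) (N:ℤ),
        Dp Δx (Dp Δx (Dp Δx (Dm Δx (Dm Δx unp)))) i * unp i
      = -(Δx/2) * ∑ i ∈ Finset.Icc (1:ℤ) (N:ℤ), (Dm Δx (Dm Δx (Dm Δx unp)) i)^2 := by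
    have t1 := sbp_Dp N hN Δx hh (Dp Δx (Dp Δx (Dm Δx (Dm Δx unp)))) unp hppm hunp
    have t2 := sbp_Dp N hN Δx hh (Dp Δx (Dm Δx (Dm Δx unp))) (Dm Δx unp) hpm2 hm1
    have t3 := sbp_Dp N hN Δx hh (Dm Δx (Dm Δx unp)) (Dm Δx (Dm Δx unp)) hm2 hm2
    have t4 := dm_self N hN Δx hh (Dm Δx (Dm Δx unp)) hm2
    have c1 : ∑ i ∈ Finset.Icc (1:ℤ) (N:ℤ),
          Dm Δx (Dm Δx unp) i * Dm Δx (Dm Δx (Dm Δx unp)) i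
        = ∑ i ∈ Finset.Icc (1:ℤ) (N:ℤ),
          Dm Δx (Dm Δx (Dm Δx unp)) i * Dm Δx (Dm Δx unp) i :=
      Finset.sum_congr rfl (fun i _ => mul_comm _ _)
    linarith
  -- energy identity from the scheme
  have hA : ∑ i ∈ Finset.Icc (1:ℤ) (N:ℤ), unp i ^ 2
      = ∑ i ∈ Finset.Icc (1:ℤ) (N:ℤ),
          ((un (i + 1) + un (i - 1)) / 2
            - Δt * ((un (i + 1) + un (i - 1)) / 2) * D0 Δx un i) * unp i
        - Δt * ∑ i ∈ Finset.Icc (1:ℤ) (N:ℤ), Dm Δx (Dp Δx (Dp Δx unp)) i * unp i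
        + Δt * ∑ i ∈ Finset.Icc (1:ℤ) (N:ℤ),
            Dp Δx (Dp Δx (Dp Δx (Dm Δx (Dm Δx unp)))) i * unp i := by
    rw [Finset.mul_sum, Finset.mul_sum, ← Finset.sum_sub_distrib, ← Finset.sum_add_distrib]
    apply Finset.sum_congr rfl
    intro i _
    linear_combination unp i * hscheme i
  -- shift identities between the different forms of the dissipative norms
  have hsq1 : ∑ i ∈ Finset.Icc (1:ℤ) (N:ℤ), (Dp Δx (Dp Δx unp) i)^2
      = ∑ i ∈ Finset.Icc (1:ℤ) (N:ℤ), (Dp Δx (Dm Δx unp) i)^2 := by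
    have pt : ∀ i : ℤ, Dp Δx (Dp Δx unp) i = Dp Δx (Dm Δx unp) (i + 1) := by
      intro i; simp only [Dp, Dm]; ring_nf
    have hs := shiftk N hN (fun i => (Dp Δx (Dm Δx unp) i)^2) (per_pow hpdm 2) 1
    rw [← hs]
    exact Finset.sum_congr rfl (fun i _ => by rw [pt i])
  have hsq2 : ∑ i ∈ Finset.Icc (1:ℤ) (N:ℤ), (Dm Δx (Dm Δx (Dm Δx unp)) i)^2
      = ∑ i ∈ Finset.Icc (1:ℤ) (N:ℤ), (Dm Δx (Dp Δx (Dp Δx unp)) i)^2 := by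
    have pt : ∀ i : ℤ, Dm Δx (Dp Δx (Dp Δx unp)) i = Dm Δx (Dm Δx (Dm Δx unp)) (i + 2) := by
      intro i; simp only [Dp, Dm]; ring_nf
    have hs := shiftk N hN (fun i => (Dm Δx (Dm Δx (Dm Δx unp)) i)^2) (per_pow hm3 2) 2
    rw [← hs]
    exact Finset.sum_congr rfl (fun i _ => by rw [pt i])
  -- pointwise bounds
  have hMb : ∀ j : ℤ, |un j| ≤ M := fun j => by
    rw [hM]; exact abs_le_sup N hN un hun j
  have hM0 : 0 ≤ M := le_trans (abs_nonneg (un 1)) (hMb 1)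
  have he0 : 0 ≤ ∑ i ∈ Finset.Icc (1:ℤ) (N:ℤ), (D0 Δx un i)^2 :=
    Finset.sum_nonneg fun i _ => sq_nonneg _
  -- Cauchy-Schwarz style bound for the explicit part against unp
  have hCS : ∑ i ∈ Finset.Icc (1:ℤ) (N:ℤ),
        ((un (i + 1) + un (i - 1)) / 2
          - Δt * ((un (i + 1) + un (i - 1)) / 2) * D0 Δx un i) * unp i
      ≤ (∑ i ∈ Finset.Icc (1:ℤ) (N:ℤ),
          ((un (i + 1) + un (i - 1)) / 2
            - Δt * ((un (i + 1) + un (i - 1)) / 2) * D0 Δx un i)^2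
        + ∑ i ∈ Finset.Icc (1:ℤ) (N:ℤ), unp i ^ 2) / 2 := by
    rw [← Finset.sum_add_distrib, Finset.sum_div]
    apply Finset.sum_le_sum
    intro i _
    nlinarith [sq_nonneg (((un (i + 1) + un (i - 1)) / 2
      - Δt * ((un (i + 1) + un (i - 1)) / 2) * D0 Δx un i) - unp i)]
  -- expansion of the explicit part
  have hGexp : ∑ i ∈ Finset.Icc (1:ℤ) (N:ℤ),
        ((un (i + 1) + un (i - 1)) / 2
          - Δt * ((un (i + 1) + un (i - 1)) / 2) * D0 Δx un i)^2
      = ∑ i ∈ Finset.Icc (1:ℤ) (N:ℤ), ((un (i + 1) + un (i - 1)) / 2)^2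
        - (2*Δt) * ∑ i ∈ Finset.Icc (1:ℤ) (N:ℤ),
            ((un (i + 1) + un (i - 1)) / 2)^2 * D0 Δx un i
        + Δt^2 * ∑ i ∈ Finset.Icc (1:ℤ) (N:ℤ),
            ((un (i + 1) + un (i - 1)) / 2)^2 * (D0 Δx un i)^2 := by
    rw [Finset.mul_sum, Finset.mul_sum, ← Finset.sum_sub_distrib, ← Finset.sum_add_distrib]
    apply Finset.sum_congr rfl
    intro i _
    ring
  have hbar2 := ubar_sq_sum N hN Δx hh un hun
  have hbarD := ubar_sq_D0_sum N hN Δx hh un hun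
  -- cubic bound
  have hcube : ∑ i ∈ Finset.Icc (1:ℤ) (N:ℤ), (D0 Δx un i)^3
      ≤ (M/Δx) * ∑ i ∈ Finset.Icc (1:ℤ) (N:ℤ), (D0 Δx un i)^2 := by
    rw [Finset.mul_sum]
    apply Finset.sum_le_sum
    intro i _
    have h1 := abs_le.mp (hMb (i+1))
    have h2 := abs_le.mp (hMb (i-1))
    have key : (un (i+1) - un (i-1))^3 ≤ 2*M*(un (i+1) - un (i-1))^2 := by
      nlinarith [sq_nonneg (un (i+1) - un (i-1))]
    have e1 : (D0 Δx un i)^3 = (un (i+1) - un (i-1))^3 / (2*Δx)^3 := by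
      simp only [D0]; rw [div_pow]
    have e2 : (M/Δx) * (D0 Δx un i)^2
        = (2*M*(un (i+1) - un (i-1))^2) / (2*Δx)^3 := by
      simp only [D0]; field_simp
    rw [e1, e2]
    exact (div_le_div_iff_of_pos_right (by positivity)).mpr key
  -- quadratic bound
  have hbarD2 : ∑ i ∈ Finset.Icc (1:ℤ) (N:ℤ),
        ((un (i + 1) + un (i - 1)) / 2)^2 * (D0 Δx un i)^2
      ≤ M^2 * ∑ i ∈ Finset.Icc (1:ℤ) (N:ℤ), (D0 Δx un i)^2 := by
    rw [Finset.mul_sum]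
    apply Finset.sum_le_sum
    intro i _
    have h1 := abs_le.mp (hMb (i+1))
    have h2 := abs_le.mp (hMb (i-1))
    have hb2 : ((un (i + 1) + un (i - 1)) / 2)^2 ≤ M^2 := by nlinarith
    nlinarith [mul_le_mul_of_nonneg_right hb2 (sq_nonneg (D0 Δx un i))]
  -- CFL consequences
  set x : ℝ := Δt/Δx*M with hxdef
  have hx0 : 0 ≤ x := mul_nonneg (le_of_lt (div_pos hΔt hxpos)) hM0
  have hx14 : x ≤ 1/4 := by nlinarith [hcfl, hx0]
  have hq : (2/3)*x + x^2 ≤ 7/8 := by nlinarith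
  have hx2 : Δt*M = x*Δx := by rw [hxdef]; field_simp
  have fe2 : Δt*Δx*M = x*Δx^2 := by
    rw [show Δt*Δx*M = (Δt*M)*Δx by ring, hx2]; ring
  have fe3 : (Δt*M)^2 = x^2*Δx^2 := by rw [hx2]; ring
  have hc8 : (2/3)*(Δt*Δx*M) + (Δt*M)^2 ≤ (7/8)*Δx^2 := by
    rw [fe2, fe3]
    calc (2/3)*(x*Δx^2) + x^2*Δx^2 = ((2/3)*x + x^2)*Δx^2 := by ring
      _ ≤ (7/8)*Δx^2 := mul_le_mul_of_nonneg_right hq (sq_nonneg Δx)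
  -- bound on the explicit part
  have fe1 : (2*Δt*Δx^2/3) * ((M/Δx) * ∑ i ∈ Finset.Icc (1:ℤ) (N:ℤ), (D0 Δx un i)^2)
      = (2/3)*(Δt*Δx*M) * ∑ i ∈ Finset.Icc (1:ℤ) (N:ℤ), (D0 Δx un i)^2 := by
    field_simp
  have hg2 : ∑ i ∈ Finset.Icc (1:ℤ) (N:ℤ),
        ((un (i + 1) + un (i - 1)) / 2
          - Δt * ((un (i + 1) + un (i - 1)) / 2) * D0 Δx un i)^2
      ≤ ∑ i ∈ Finset.Icc (1:ℤ) (N:ℤ), un i ^ 2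
        - (Δx^2/8) * ∑ i ∈ Finset.Icc (1:ℤ) (N:ℤ), (D0 Δx un i)^2 := by
    have m1 := mul_le_mul_of_nonneg_left hcube
      (show (0:ℝ) ≤ 2*Δt*Δx^2/3 by positivity)
    have m2 := mul_le_mul_of_nonneg_left hbarD2 (sq_nonneg Δt)
    have m3 := mul_le_mul_of_nonneg_right hc8 he0
    have hT : (2*Δt) * (∑ i ∈ Finset.Icc (1:ℤ) (N:ℤ),
          ((un (i + 1) + un (i - 1)) / 2)^2 * D0 Δx un i)
        = -(2*Δt*Δx^2/3) * ∑ i ∈ Finset.Icc (1:ℤ) (N:ℤ), (D0 Δx un i)^3 := by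
      rw [hbarD]; ring
    have fm : Δt^2 * (M^2 * ∑ i ∈ Finset.Icc (1:ℤ) (N:ℤ), (D0 Δx un i)^2)
        = (Δt*M)^2 * ∑ i ∈ Finset.Icc (1:ℤ) (N:ℤ), (D0 Δx un i)^2 := by
      ring
    linarith [hGexp, hbar2, hT, m1, fe1, m2, fm, m3]
  -- final assembly
  have k1 : Δt * ∑ i ∈ Finset.Icc (1:ℤ) (N:ℤ), Dm Δx (Dp Δx (Dp Δx unp)) i * unp i
      = Δt*Δx/2 * ∑ i ∈ Finset.Icc (1:ℤ) (N:ℤ), (Dp Δx (Dp Δx unp) i)^2 := by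
    rw [hX]; ring
  have k2 : Δt * ∑ i ∈ Finset.Icc (1:ℤ) (N:ℤ),
        Dp Δx (Dp Δx (Dp Δx (Dm Δx (Dm Δx unp)))) i * unp i
      = -(Δt*Δx/2) * ∑ i ∈ Finset.Icc (1:ℤ) (N:ℤ), (Dm Δx (Dm Δx (Dm Δx unp)) i)^2 := by
    rw [hY]; ring
  have hfin : ∑ i ∈ Finset.Icc (1:ℤ) (N:ℤ), unp i ^ 2
      + Δt*Δx*(∑ i ∈ Finset.Icc (1:ℤ) (N:ℤ), (Dm Δx (Dm Δx (Dm Δx unp)) i)^2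
          + ∑ i ∈ Finset.Icc (1:ℤ) (N:ℤ), (Dp Δx (Dp Δx unp) i)^2)
      + Δx^2/8 * ∑ i ∈ Finset.Icc (1:ℤ) (N:ℤ), (D0 Δx un i)^2
      ≤ ∑ i ∈ Finset.Icc (1:ℤ) (N:ℤ), un i ^ 2 := by
    linarith [hA, k1, k2, hCS, hg2]
  show nh2 N Δx unp
      + Δt * Δx * (nh2 N Δx (Dm Δx (Dp Δx (Dp Δx unp))) + nh2 N Δx (Dp Δx (Dm Δx unp)))
      + (Δx ^ 2 / 8) * nh2 N Δx (D0 Δx un)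
    ≤ nh2 N Δx un
  simp only [nh2]
  rw [← hsq2, ← hsq1]
  nlinarith [mul_le_mul_of_nonneg_left hfin hxpos.le]
end

section
/- For every c ∈ ℝ, the function u(x,t) = (105/169) · sech⁴( (x − 36t/169 − c) / (2√13) ) is an exact solution of the Kawahara equation: for all x, t ∈ ℝ one has ∂ₜu = −u ∂ₓu − ∂ₓ³u + ∂ₓ⁵u. -/
open Real
lemma hlin (k b y : ℝ) : HasDerivAt (fun z : ℝ => k*z+b) k y := by
  simpa using ((hasDerivAt_id y).const_mul k).add_const b

lemma hA (k b : ℝ) (q : ℕ) (y : ℝ) :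
    HasDerivAt (fun z => ((Real.cosh (k*z+b))⁻¹) ^ (q+1))
      (-((q:ℝ)+1) * k * Real.sinh (k*y+b) * ((Real.cosh (k*y+b))⁻¹) ^ (q+2)) y := by
  have hcosh : HasDerivAt (fun z => Real.cosh (k*z+b)) (Real.sinh (k*y+b) * k) y :=
    (Real.hasDerivAt_cosh _).comp y (hlin k b y)
  have hne : Real.cosh (k*y+b) ≠ 0 := (Real.cosh_pos _).ne'
  have h := (hcosh.inv hne).pow (q+1)
  refine h.congr_deriv ?_
  simp only [Pi.inv_apply, Pi.pow_apply, Nat.add_sub_cancel, inv_pow, Pi.mul_apply]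
  push_cast
  field_simp
  ring

lemma hB (k b : ℝ) (p q : ℕ) (y : ℝ) :
    HasDerivAt (fun z => Real.sinh (k*z+b)^(p+1) * ((Real.cosh (k*z+b))⁻¹) ^ (q+1))
      (k * (((p:ℝ)+1) * Real.sinh (k*y+b)^p * ((Real.cosh (k*y+b))⁻¹)^q
         - ((q:ℝ)+1) * Real.sinh (k*y+b)^(p+2) * ((Real.cosh (k*y+b))⁻¹)^(q+2))) y := by
  have hsinh : HasDerivAt (fun z => Real.sinh (k*z+b)) (Real.cosh (k*y+b) * k) y :=
    (Real.hasDerivAt_sinh _).comp y (hlin k b y)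
  have hne : Real.cosh (k*y+b) ≠ 0 := (Real.cosh_pos _).ne'
  have h := (hsinh.pow (p+1)).mul (hA k b q y)
  refine h.congr_deriv ?_
  simp only [Pi.inv_apply, Pi.pow_apply, Nat.add_sub_cancel, inv_pow, Pi.mul_apply]
  push_cast
  field_simp
  ring

lemma hG0 (A k b y : ℝ) :
    HasDerivAt (fun z => A * ((Real.cosh (k*z+b))⁻¹)^4)
      ((A * (-4*k)) * (Real.sinh (k*y+b)^1 * ((Real.cosh (k*y+b))⁻¹)^5)) y := by
  have h := (hA k b 3 y).const_mul A
  refine h.congr_deriv ?_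
  push_cast; ring

lemma hG1 (A k b y : ℝ) :
    HasDerivAt (fun z => (A * (-4*k)) * (Real.sinh (k*z+b)^1 * ((Real.cosh (k*z+b))⁻¹)^5))
      (A * k^2 * (-4*((Real.cosh (k*y+b))⁻¹)^4 + 20*Real.sinh (k*y+b)^2*((Real.cosh (k*y+b))⁻¹)^6)) y := by
  have h := (hB k b 0 4 y).const_mul (A * (-4*k))
  refine h.congr_deriv ?_
  push_cast; ring

lemma hG2 (A k b y : ℝ) :
    HasDerivAt (fun z => A * k^2 * (-4*((Real.cosh (k*z+b))⁻¹)^4 + 20*Real.sinh (k*z+b)^2*((Real.cosh (k*z+b))⁻¹)^6))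
      (A * k^3 * (56*Real.sinh (k*y+b)^1*((Real.cosh (k*y+b))⁻¹)^5 - 120*Real.sinh (k*y+b)^3*((Real.cosh (k*y+b))⁻¹)^7)) y := by
  have h := (((hA k b 3 y).const_mul (-4)).add ((hB k b 1 5 y).const_mul 20)).const_mul (A * k^2)
  refine (h.congr_deriv ?_).congr_of_eventuallyEq (Filter.Eventually.of_forall fun z => ?_)
  · push_cast; ring
  · simp only [Pi.add_apply, Pi.sub_apply]; ring


lemma hG3 (A k b y : ℝ) :
    HasDerivAt (fun z => A * k^3 * (56*Real.sinh (k*z+b)^1*((Real.cosh (k*z+b))⁻¹)^5 - 120*Real.sinh (k*z+b)^3*((Real.cosh (k*z+b))⁻¹)^7))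
      (A * k^4 * (56*((Real.cosh (k*y+b))⁻¹)^4 - 640*Real.sinh (k*y+b)^2*((Real.cosh (k*y+b))⁻¹)^6 + 840*Real.sinh (k*y+b)^4*((Real.cosh (k*y+b))⁻¹)^8)) y := by
  have h := (((hB k b 0 4 y).const_mul 56).sub ((hB k b 2 6 y).const_mul 120)).const_mul (A * k^3)
  refine (h.congr_deriv ?_).congr_of_eventuallyEq (Filter.Eventually.of_forall fun z => ?_)
  · push_cast; ring
  · simp only [Pi.add_apply, Pi.sub_apply]; ring


lemma hG4 (A k b y : ℝ) :
    HasDerivAt (fun z => A * k^4 * (56*((Real.cosh (k*z+b))⁻¹)^4 - 640*Real.sinh (k*z+b)^2*((Real.cosh (k*z+b))⁻¹)^6 + 840*Real.sinh (k*z+b)^4*((Real.cosh (k*z+b))⁻¹)^8))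
      (A * k^5 * (-1504*Real.sinh (k*y+b)^1*((Real.cosh (k*y+b))⁻¹)^5 + 7200*Real.sinh (k*y+b)^3*((Real.cosh (k*y+b))⁻¹)^7 - 6720*Real.sinh (k*y+b)^5*((Real.cosh (k*y+b))⁻¹)^9)) y := by
  have h := ((((hA k b 3 y).const_mul 56).sub ((hB k b 1 5 y).const_mul 640)).add ((hB k b 3 7 y).const_mul 840)).const_mul (A * k^4)
  refine (h.congr_deriv ?_).congr_of_eventuallyEq (Filter.Eventually.of_forall fun z => ?_)
  · push_cast; ring
  · simp only [Pi.add_apply, Pi.sub_apply]; ring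


/-- Exact travelling-wave (soliton) solution used in the paper's Numerical Experiment 1:
for every `c ∈ ℝ`, `u(x,t) = (105/169) sech⁴((x − 36t/169 − c)/(2√13))` solves the Kawahara
equation `u_t = −u u_x − u_{xxx} + u_{xxxxx}` (with `sech y = 1/cosh y`). -/
theorem kawahara_soliton (c : ℝ)
    (u : ℝ → ℝ → ℝ)
    (hu : ∀ x t : ℝ,
      u x t = (105 / 169) * (1 / Real.cosh ((x - 36 * t / 169 - c) / (2 * Real.sqrt 13))) ^ 4) :
    ∀ x t : ℝ,
      deriv (fun s => u x s) t =
        - u x t * deriv (fun y => u y t) x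
        - iteratedDeriv 3 (fun y => u y t) x
        + iteratedDeriv 5 (fun y => u y t) x := by
  intro x t
  set A : ℝ := 105/169 with hA
  set k : ℝ := (2*Real.sqrt 13)⁻¹ with hk
  set b : ℝ := (-(36*t/169) - c) * (2*Real.sqrt 13)⁻¹ with hb
  set k2 : ℝ := -(36/169) * (2*Real.sqrt 13)⁻¹ with hk2
  set b2 : ℝ := (x - c) * (2*Real.sqrt 13)⁻¹ with hb2
  have hx : (fun y => u y t) = fun z => A * ((Real.cosh (k*z+b))⁻¹)^4 := by
    funext y
    rw [hu, hk, hb, hA, one_div]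
    congr 2
    ring
  have ht : (fun s => u x s) = fun s => A * ((Real.cosh (k2*s+b2))⁻¹)^4 := by
    funext s
    rw [hu, hk2, hb2, hA, one_div]
    congr 2
    ring
  have d0 := fun z => (hG0 A k b z).deriv
  have e0 : deriv (fun z => A * ((Real.cosh (k*z+b))⁻¹)^4) = fun z => (A * (-4*k)) * (Real.sinh (k*z+b)^1 * ((Real.cosh (k*z+b))⁻¹)^5) := funext fun z => (hG0 A k b z).deriv
  have e1 : deriv (fun z => (A * (-4*k)) * (Real.sinh (k*z+b)^1 * ((Real.cosh (k*z+b))⁻¹)^5)) = fun z => A * k^2 * (-4*((Real.cosh (k*z+b))⁻¹)^4 + 20*Real.sinh (k*z+b)^2*((Real.cosh (k*z+b))⁻¹)^6) := funext fun z => (hG1 A k b z).deriv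
  have e2 : deriv (fun z => A * k^2 * (-4*((Real.cosh (k*z+b))⁻¹)^4 + 20*Real.sinh (k*z+b)^2*((Real.cosh (k*z+b))⁻¹)^6)) = fun z => A * k^3 * (56*Real.sinh (k*z+b)^1*((Real.cosh (k*z+b))⁻¹)^5 - 120*Real.sinh (k*z+b)^3*((Real.cosh (k*z+b))⁻¹)^7) := funext fun z => (hG2 A k b z).deriv
  have e3 : deriv (fun z => A * k^3 * (56*Real.sinh (k*z+b)^1*((Real.cosh (k*z+b))⁻¹)^5 - 120*Real.sinh (k*z+b)^3*((Real.cosh (k*z+b))⁻¹)^7)) = fun z => A * k^4 * (56*((Real.cosh (k*z+b))⁻¹)^4 - 640*Real.sinh (k*z+b)^2*((Real.cosh (k*z+b))⁻¹)^6 + 840*Real.sinh (k*z+b)^4*((Real.cosh (k*z+b))⁻¹)^8) := funext fun z => (hG3 A k b z).deriv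
  have e4 : deriv (fun z => A * k^4 * (56*((Real.cosh (k*z+b))⁻¹)^4 - 640*Real.sinh (k*z+b)^2*((Real.cosh (k*z+b))⁻¹)^6 + 840*Real.sinh (k*z+b)^4*((Real.cosh (k*z+b))⁻¹)^8)) = fun z => A * k^5 * (-1504*Real.sinh (k*z+b)^1*((Real.cosh (k*z+b))⁻¹)^5 + 7200*Real.sinh (k*z+b)^3*((Real.cosh (k*z+b))⁻¹)^7 - 6720*Real.sinh (k*z+b)^5*((Real.cosh (k*z+b))⁻¹)^9) := funext fun z => (hG4 A k b z).deriv
  rw [hx, ht, hu]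
  rw [(hG0 A k2 b2 t).deriv, e0]
  rw [iteratedDeriv_succ', e0, iteratedDeriv_succ', e1, iteratedDeriv_one, e2]
  rw [iteratedDeriv_succ', e0, iteratedDeriv_succ', e1, iteratedDeriv_succ', e2,
      iteratedDeriv_succ', e3, iteratedDeriv_one, e4]
  have harg1 : k2*t+b2 = (x - 36*t/169 - c)/(2*Real.sqrt 13) := by rw [hk2, hb2]; ring
  have harg2 : k*x+b = (x - 36*t/169 - c)/(2*Real.sqrt 13) := by rw [hk, hb]; ring
  beta_reduce
  rw [harg1, harg2]
  set D := (x - 36*t/169 - c)/(2*Real.sqrt 13) with hD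
  have hC : Real.cosh D ≠ 0 := (Real.cosh_pos D).ne'
  have hS : Real.sinh D ^ 2 = Real.cosh D ^ 2 - 1 := Real.sinh_sq D
  have hKsq : k^2 = 1/52 := by
    rw [hk, inv_pow, mul_pow, Real.sq_sqrt (by norm_num : (13:ℝ) ≥ 0)]
    norm_num
  have hk2' : k2 = -(36/169) * k := by rw [hk2, hk]
  rw [hk2',
      show k^3 = (1/52)*k from by rw [show (1/52:ℝ) = k^2 from hKsq.symm]; ring,
      show k^5 = (1/2704)*k from by rw [show (1/2704:ℝ) = (k^2)^2 from by rw [hKsq]; norm_num]; ring,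
      show Real.sinh D ^ 3 = Real.sinh D * (Real.cosh D ^2 - 1) from by rw [← hS]; ring,
      show Real.sinh D ^ 5 = Real.sinh D * (Real.cosh D ^2 - 1)^2 from by rw [← hS]; ring,
      hA]
  field_simp
  ring
end
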